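/- In the vector space with basis {u_{i,j} : i,j ≥ 0} and linear map ∂u_{i,j} = u_{i+1,j} + u_{i,j+1}, the two families {u_{i,j} : i,j ≥ 0} and {∂^n u_{0,m} : m,n ≥ 0} span the same subspace, namely the whole space. -/

import Mathlib

/-- In the free vector space with basis {u_{i,j}} and ∂u_{i,j} =
u_{i+1,j} + u_{i,j+1}, the families {u_{i,j}} and {∂^n u_{0,m}} span the same
subspace, namely the whole space. -/
theorem stmt_2
    (D : ((ℕ × ℕ) →₀ ℂ) →ₗ[ℂ] ((ℕ × ℕ) →₀ ℂ))
    (hD : ∀ i j : ℕ, D (Finsupp.single (i, j) (1 : ℂ)) =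
      Finsupp.single (i + 1, j) 1 + Finsupp.single (i, j + 1) 1) :
    Submodule.span ℂ {x | ∃ m n : ℕ, x = (⇑D)^[n] (Finsupp.single ((0 : ℕ), m) (1 : ℂ))} =
        Submodule.span ℂ {x | ∃ i j : ℕ, x = Finsupp.single (i, j) (1 : ℂ)} ∧
      Submodule.span ℂ {x | ∃ m n : ℕ, x = (⇑D)^[n] (Finsupp.single ((0 : ℕ), m) (1 : ℂ))} =
        (⊤ : Submodule ℂ ((ℕ × ℕ) →₀ ℂ)) := by
  set S : Set ((ℕ × ℕ) →₀ ℂ) :=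
    {x | ∃ m n : ℕ, x = (⇑D)^[n] (Finsupp.single ((0 : ℕ), m) (1 : ℂ))} with hSdef
  have hDspan : ∀ x ∈ Submodule.span ℂ S, D x ∈ Submodule.span ℂ S := by
    intro x hx
    have hle : Submodule.span ℂ S ≤ Submodule.comap D (Submodule.span ℂ S) := by
      apply Submodule.span_le.2
      rintro y ⟨m, n, rfl⟩
      exact Submodule.subset_span ⟨m, n + 1, by rw [Function.iterate_succ_apply']⟩
    exact hle hx
  have key : ∀ i j : ℕ, Finsupp.single (i, j) (1 : ℂ) ∈ Submodule.span ℂ S := by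
    intro i
    induction i with
    | zero => intro j; exact Submodule.subset_span ⟨j, 0, rfl⟩
    | succ i ih =>
      intro j
      have h1 : D (Finsupp.single (i, j) (1 : ℂ)) ∈ Submodule.span ℂ S := hDspan _ (ih j)
      rw [hD] at h1
      have h2 := ih (j + 1)
      have h3 := Submodule.sub_mem _ h1 h2
      simpa using h3
  have hsingles :
      Submodule.span ℂ {x | ∃ i j : ℕ, x = Finsupp.single (i, j) (1 : ℂ)} = ⊤ := by
    rw [eq_top_iff]
    intro f _
    induction f using Finsupp.induction with
    | zero => exact Submodule.zero_mem _
    | single_add a b f _ _ ih =>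
      refine Submodule.add_mem _ ?_ (ih trivial)
      have hb : Finsupp.single a b = b • Finsupp.single a (1 : ℂ) := by
        rw [Finsupp.smul_single, smul_eq_mul, mul_one]
      rw [hb]
      exact Submodule.smul_mem _ _ (Submodule.subset_span ⟨a.1, a.2, by simp⟩)
  have hStop : Submodule.span ℂ S = ⊤ := by
    rw [eq_top_iff, ← hsingles, Submodule.span_le]
    rintro x ⟨i, j, rfl⟩
    exact key i j
  exact ⟨hStop.trans hsingles.symm, hStop⟩
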